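/- arXiv:2310.07862 — 3 statements merged into one kernel-verified Lean document; each statement's English description precedes it below -/
import Mathlib

section
/- Let G be a weighted graph, let P be a shortest path in G connecting vertices u and v, and let Q be another u-v path (possibly non-simple) in G. Then either every edge of P belongs to Q, or the sum of the lengths of P and Q is at least the girth of G (the minimum length of a cycle in G). -/
open SimpleGraph

/-- The weighted length of a walk: sum of the weights of its edges (with multiplicity). -/
def wlength {V : Type*} {G : SimpleGraph V} (w : V → V → ℝ) {u v : V} (p : G.Walk u v) : ℝ :=
  (p.darts.map (fun d => w d.toProd.1 d.toProd.2)).sum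

/-- The weighted shortest-path distance between two vertices. -/
noncomputable def wdist {V : Type*} (G : SimpleGraph V) (w : V → V → ℝ) (u v : V) : ℝ :=
  sInf {l | ∃ p : G.Walk u v, l = wlength w p}

/-- The weighted girth: the minimum weighted length of a cycle. -/
noncomputable def wgirth {V : Type*} (G : SimpleGraph V) (w : V → V → ℝ) : ℝ :=
  sInf {l | ∃ (a : V) (c : G.Walk a a), c.IsCycle ∧ l = wlength w c}

section Aux

variable {V : Type*} {G : SimpleGraph V} (w : V → V → ℝ)

lemma wlength_cons {a b c : V} (h : G.Adj a b) (p : G.Walk b c) :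
    wlength w (Walk.cons h p) = w a b + wlength w p := by
  simp [wlength]

lemma wlength_append {a b c : V} (p : G.Walk a b) (q : G.Walk b c) :
    wlength w (p.append q) = wlength w p + wlength w q := by
  simp [wlength, Walk.darts_append]

lemma wlength_reverse (hsymm : ∀ u v, w u v = w v u) {a b : V} (p : G.Walk a b) :
    wlength w p.reverse = wlength w p := by
  simp only [wlength, Walk.darts_reverse, List.map_reverse, List.sum_reverse, List.map_map]
  congr 1
  apply List.map_congr_left
  intro d _
  simp [Dart.symm, hsymm d.toProd.1 d.toProd.2]

lemma wlength_nonneg (hpos : ∀ u v, G.Adj u v → 0 < w u v) {a b : V} (p : G.Walk a b) :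
    0 ≤ wlength w p := by
  apply List.sum_nonneg
  intro x hx
  obtain ⟨d, hd, rfl⟩ := List.mem_map.1 hx
  exact (hpos _ _ d.adj).le

lemma darts_dropUntil_sublist [DecidableEq V] {a b : V} (p : G.Walk a b) (x : V)
    (hx : x ∈ p.support) : List.Sublist (p.dropUntil x hx).darts p.darts := by
  conv_rhs => rw [← p.take_spec hx]
  rw [Walk.darts_append]
  exact List.sublist_append_right _ _

lemma darts_bypass_sublist [DecidableEq V] {a b : V} (p : G.Walk a b) :
    List.Sublist p.bypass.darts p.darts := by
  induction p with
  | nil => simp [Walk.bypass]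
  | cons h p ih =>
    rw [Walk.bypass]
    split_ifs with hs
    · exact ((darts_dropUntil_sublist _ _ hs).trans ih).trans (List.sublist_cons_self _ _)
    · rw [Walk.darts_cons, Walk.darts_cons]
      exact List.Sublist.cons₂ _ ih

lemma wlength_bypass_le [DecidableEq V] (hpos : ∀ u v, G.Adj u v → 0 < w u v)
    {a b : V} (p : G.Walk a b) : wlength w p.bypass ≤ wlength w p := by
  apply List.Sublist.sum_le_sum ((darts_bypass_sublist p).map _)
  intro x hx
  obtain ⟨d, hd, rfl⟩ := List.mem_map.1 hx
  exact (hpos _ _ d.adj).le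

lemma wgirth_le_cycle (hpos : ∀ u v, G.Adj u v → 0 < w u v) {a : V} (c : G.Walk a a)
    (hc : c.IsCycle) : wgirth G w ≤ wlength w c := by
  apply csInf_le
  · refine ⟨0, ?_⟩
    rintro l ⟨x, c', _, rfl⟩
    exact wlength_nonneg w hpos c'
  · exact ⟨a, c, hc, rfl⟩

lemma girth_le_of_avoiding_walk [DecidableEq V] (hsymm : ∀ u v, w u v = w v u)
    (hpos : ∀ u v, G.Adj u v → 0 < w u v) {x y : V} (h : G.Adj x y)
    (W : G.Walk x y) (he : s(x, y) ∉ W.edges) :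
    wgirth G w ≤ w x y + wlength w W := by
  have hbp : s(y, x) ∉ W.bypass.edges := by
    rw [Sym2.eq_swap]
    exact fun hm => he (W.edges_bypass_subset hm)
  have hc : (Walk.cons h.symm W.bypass).IsCycle :=
    Path.cons_isCycle ⟨W.bypass, W.bypass_isPath⟩ h.symm hbp
  calc wgirth G w ≤ wlength w (Walk.cons h.symm W.bypass) := wgirth_le_cycle w hpos _ hc
    _ = w y x + wlength w W.bypass := wlength_cons w _ _
    _ ≤ w x y + wlength w W := by
        rw [hsymm y x]
        have := wlength_bypass_le w hpos W
        linarith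

lemma key [DecidableEq V] (hsymm : ∀ u v, w u v = w v u)
    (hpos : ∀ u v, G.Adj u v → 0 < w u v) :
    ∀ {a b : V} (P : G.Walk a b), P.IsPath → ∀ (S : G.Walk a b) (e : Sym2 V),
    e ∈ P.edges → e ∉ S.edges → wgirth G w ≤ wlength w P + wlength w S := by
  intro a b P
  induction P with
  | nil => intro _ S e he _; simp at he
  | @cons a c b h P' ih =>
    intro hP S e heP heS
    have hnodup := hP.edges_nodup
    rw [Walk.edges_cons] at heP hnodup
    rcases List.mem_cons.1 heP with rfl | hmem
    · have heW : s(a, c) ∉ (S.append P'.reverse).edges := by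
        rw [Walk.edges_append, List.mem_append]
        push_neg
        refine ⟨heS, ?_⟩
        rw [Walk.edges_reverse, List.mem_reverse]
        exact (List.nodup_cons.1 hnodup).1
      have := girth_le_of_avoiding_walk w hsymm hpos h (S.append P'.reverse) heW
      rw [wlength_append, wlength_reverse w hsymm, wlength_cons] at *
      linarith
    · have hne : e ≠ s(c, a) := by
        rw [Sym2.eq_swap]
        rintro rfl
        exact (List.nodup_cons.1 hnodup).1 hmem
      have heS' : e ∉ (Walk.cons h.symm S).edges := by
        rw [Walk.edges_cons, List.mem_cons]
        push_neg
        exact ⟨hne, heS⟩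
      have := ih hP.of_cons (Walk.cons h.symm S) e hmem heS'
      rw [wlength_cons w h.symm S, hsymm c a] at this
      rw [wlength_cons]
      linarith

end Aux

/-- if `P` is a shortest `u`-`v` path in a positively weighted graph `G` and `Q`
is any other `u`-`v` walk, then either every edge of `P` belongs to `Q`, or
`|P| + |Q| ≥ girth(G)`. -/
theorem shortest_path_subset_or_girth {V : Type*} (G : SimpleGraph V) (w : V → V → ℝ)
    (hsymm : ∀ u v, w u v = w v u) (hpos : ∀ u v, G.Adj u v → 0 < w u v)
    {u v : V} (P : G.Walk u v) (hP : P.IsPath) (hshort : wlength w P = wdist G w u v)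
    (Q : G.Walk u v) :
    (∀ e ∈ P.edges, e ∈ Q.edges) ∨ wgirth G w ≤ wlength w P + wlength w Q := by
  classical
  by_cases hall : ∀ e ∈ P.edges, e ∈ Q.edges
  · exact Or.inl hall
  · right
    push_neg at hall
    obtain ⟨e, heP, heQ⟩ := hall
    exact key w hsymm hpos P hP Q e heP heQ
end

section
/- Let G be an unweighted graph and let P and Q be two simple paths in G such that the total number of edges of P plus the number of edges of Q is strictly less than the girth of G. Then the intersection of P and Q (as edge sets) forms a contiguous subpath of P. -/
open SimpleGraph

private lemma filter_eq_takeWhile_aux {α : Type*} (p : α → Bool) :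
    ∀ (l : List α),
      (∀ l₁ l₂ l₃ (g f : α), l = l₁ ++ (g :: (l₂ ++ (f :: l₃))) → p g = false → p f = false) →
      l.filter p = l.takeWhile p
  | [], _ => rfl
  | b :: l, H => by
    cases hb : p b with
    | true =>
      simp only [List.filter_cons, hb, List.takeWhile_cons, if_true]
      rw [filter_eq_takeWhile_aux p l
        (fun l₁ l₂ l₃ g f h => H (b :: l₁) l₂ l₃ g f (by simp [h]))]
    | false =>
      simp only [List.filter_cons, hb, List.takeWhile_cons]
      have : ∀ a ∈ l, ¬ (p a = true) := by
        intro a ha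
        obtain ⟨s, t, rfl⟩ := List.append_of_mem ha
        simp [H [] s t b a rfl hb]
      simp [List.filter_eq_nil_iff.mpr this]

private lemma filter_infix_aux {α : Type*} (p : α → Bool) :
    ∀ (l : List α),
      (∀ l₁ l₂ l₃ l₄ (e g f : α), l = l₁ ++ (e :: (l₂ ++ (g :: (l₃ ++ (f :: l₄))))) →
        p e = true → p g = false → p f = false) →
      ∃ i j, l.filter p = (l.drop i).take j
  | [], _ => ⟨0, 0, rfl⟩
  | a :: l, H => by
    cases ha : p a with
    | false =>
      obtain ⟨i, j, hij⟩ := filter_infix_aux p l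
        (fun l₁ l₂ l₃ l₄ e g f h => H (a :: l₁) l₂ l₃ l₄ e g f (by simp [h]))
      refine ⟨i + 1, j, ?_⟩
      simpa [List.filter_cons, ha] using hij
    | true =>
      refine ⟨0, ((a :: l).takeWhile p).length, ?_⟩
      rw [List.drop_zero, ← List.prefix_iff_eq_take.mp (List.takeWhile_prefix p)]
      apply filter_eq_takeWhile_aux
      intro l₁ l₂ l₃ g f h hg
      cases l₁ with
      | nil =>
        simp only [List.nil_append, List.cons.injEq] at h
        exact absurd hg (by rw [h.1] at ha; simp [ha])
      | cons c l₁' =>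
        simp only [List.cons_append, List.cons.injEq] at h
        exact H [] l₁' l₂ l₃ a g f (by simp [h.2]) ha hg

private lemma exists_suffix_walk {V : Type*} {H : SimpleGraph V} :
    ∀ {u v : V} (P : H.Walk u v) (l₁ m : List (Sym2 V)), P.edges = l₁ ++ m →
      ∃ (a : V) (W : H.Walk a v), W.edges = m ∧ (P.IsPath → W.IsPath)
  | u, _, SimpleGraph.Walk.nil, l₁, m, h => by
    refine ⟨u, SimpleGraph.Walk.nil, ?_, fun _ => SimpleGraph.Walk.IsPath.nil⟩
    simp only [SimpleGraph.Walk.edges_nil] at h ⊢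
    exact ((List.append_eq_nil_iff.mp h.symm).2).symm
  | u, v, SimpleGraph.Walk.cons had q, l₁, m, h => by
    cases l₁ with
    | nil =>
      exact ⟨u, SimpleGraph.Walk.cons had q, by simpa using h, fun hp => hp⟩
    | cons e l₁' =>
      simp only [SimpleGraph.Walk.edges_cons, List.cons_append, List.cons.injEq] at h
      obtain ⟨a, W, hW, hp⟩ := exists_suffix_walk q l₁' m h.2
      exact ⟨a, W, hW, fun hpp => hp hpp.of_cons⟩

private lemma exists_mid_walk {V : Type*} {H : SimpleGraph V} {u v : V} (P : H.Walk u v)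
    (hP : P.IsPath) (l₁ m l₂ : List (Sym2 V)) (h : P.edges = l₁ ++ m ++ l₂) :
    ∃ (a b : V) (W : H.Walk a b), W.edges = m ∧ W.IsPath := by
  obtain ⟨a, W₁, hW₁, hp₁⟩ := exists_suffix_walk P l₁ (m ++ l₂)
    (by simpa [List.append_assoc] using h)
  obtain ⟨b, W₂, hW₂, hp₂⟩ := exists_suffix_walk W₁.reverse l₂.reverse m.reverse
    (by simp [hW₁])
  exact ⟨a, b, W₂.reverse, by simp [hW₂], ((hp₂ (hp₁ hP).reverse).reverse)⟩

private lemma head_edge_eq {V : Type*} {H : SimpleGraph V} :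
    ∀ {a b : V} (W : H.Walk a b) (e : Sym2 V) (l : List (Sym2 V)), W.edges = e :: l →
      ∃ c, e = s(a, c)
  | a, _, SimpleGraph.Walk.nil, e, l, h => by simp at h
  | a, _, SimpleGraph.Walk.cons (v := c) had q, e, l, h => by
    simp only [SimpleGraph.Walk.edges_cons, List.cons.injEq] at h
    exact ⟨c, h.1.symm⟩

/-- if `P` and `Q` are simple paths of an unweighted graph `G` with
`|E(P)| + |E(Q)| < girth(G)`, then the edges of `P` that also lie on `Q` form a contiguous
subpath (an infix) of `P`. -/
theorem path_intersection_contiguous {V : Type*} [DecidableEq V] (G : SimpleGraph V)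
    {u v x y : V} (P : G.Walk u v) (hP : P.IsPath) (Q : G.Walk x y) (hQ : Q.IsPath)
    (hlen : (P.length + Q.length : ℕ∞) < G.girth) :
    ∃ i j : ℕ, P.edges.filter (fun e => e ∈ Q.edges) = (P.edges.drop i).take j := by
  classical
  -- The union graph of the edges of `P` and `Q`.
  set H : SimpleGraph V := SimpleGraph.fromEdgeSet {e | e ∈ P.edges ∨ e ∈ Q.edges} with hH
  have hmemH : ∀ e : Sym2 V, (e ∈ P.edges ∨ e ∈ Q.edges) → e ∈ H.edgeSet := by
    intro e he
    rw [hH, SimpleGraph.edgeSet_fromEdgeSet]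
    refine ⟨he, ?_⟩
    have heG : e ∈ G.edgeSet := by
      rcases he with he | he
      · exact P.edges_subset_edgeSet he
      · exact Q.edges_subset_edgeSet he
    exact G.not_isDiag_of_mem_edgeSet heG
  have hle : H ≤ G := by
    intro a b hab
    rw [hH, SimpleGraph.fromEdgeSet_adj] at hab
    have : s(a, b) ∈ G.edgeSet := by
      rcases hab.1 with he | he
      · exact P.edges_subset_edgeSet he
      · exact Q.edges_subset_edgeSet he
    exact G.mem_edgeSet.mp this
  have hGnac : ¬ G.IsAcyclic := by
    intro hG
    rw [hG.girth_eq_zero] at hlen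
    simpa using hlen
  have hgirth : (G.girth : ℕ∞) = G.egirth :=
    ENat.coe_toNat (by rw [Ne, SimpleGraph.egirth_eq_top]; exact hGnac)
  -- `H` is acyclic.
  have hac : H.IsAcyclic := by
    intro w c hc
    have hsub : c.edges ⊆ P.edges ++ Q.edges := by
      intro e he
      have := c.edges_subset_edgeSet he
      rw [hH, SimpleGraph.edgeSet_fromEdgeSet] at this
      rcases this.1 with h' | h'
      · exact List.mem_append.mpr (Or.inl h')
      · exact List.mem_append.mpr (Or.inr h')
    have hnd : c.edges.Nodup := hc.isTrail.edges_nodup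
    have hlen' : c.length ≤ P.length + Q.length := by
      have := (List.subperm_of_subset hnd hsub).length_le
      simpa [SimpleGraph.Walk.length_edges] using this
    have hc' : (c.mapLe hle).IsCycle := hc.mapLe hle
    have h1 : G.egirth ≤ ((c.mapLe hle).length : ℕ∞) :=
      SimpleGraph.le_egirth.mp le_rfl _ (c.mapLe hle) hc'
    rw [SimpleGraph.Walk.length_map] at h1
    have h2 : (P.length + Q.length : ℕ∞) < (c.length : ℕ∞) :=
      lt_of_lt_of_le (by rw [hgirth] at hlen; exact_mod_cast hlen) h1
    have : c.length ≤ P.length + Q.length := hlen'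
    exact absurd h2 (by exact_mod_cast not_lt.mpr (by exact_mod_cast this))
  -- Transfer `P` and `Q` to `H`.
  have hPe : ∀ e ∈ P.edges, e ∈ H.edgeSet := fun e he => hmemH e (Or.inl he)
  have hQe : ∀ e ∈ Q.edges, e ∈ H.edgeSet := fun e he => hmemH e (Or.inr he)
  set P' := P.transfer H hPe with hP'def
  set Q' := Q.transfer H hQe with hQ'def
  have hP' : P'.IsPath := hP.transfer hPe
  have hP'e : P'.edges = P.edges := SimpleGraph.Walk.edges_transfer P hPe
  have hQ'e : Q'.edges = Q.edges := SimpleGraph.Walk.edges_transfer Q hQe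
  -- Apply the list lemma.
  apply filter_infix_aux
  intro l₁ l₂ l₃ l₄ e g f h he hg
  by_contra hf'
  simp only [decide_eq_true_eq] at he
  simp only [decide_eq_false_iff_not] at hg
  rw [Bool.not_eq_false, decide_eq_true_eq] at hf'
  rename_i hf0
  -- extract the subwalk of `P'` whose edges are `e :: (l₂ ++ (g :: (l₃ ++ [f])))`.
  have hdecomp : P'.edges = l₁ ++ (e :: (l₂ ++ (g :: (l₃ ++ [f])))) ++ l₄ := by
    rw [hP'e, h]; simp
  obtain ⟨a, b, W, hWe, hWpath⟩ := exists_mid_walk P' hP' l₁ _ l₄ hdecomp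
  -- endpoints of `W` lie on `Q`.
  obtain ⟨c₁, hc₁⟩ := head_edge_eq W e _ hWe
  have hrev : W.reverse.edges = f :: ((l₃.reverse ++ (g :: l₂.reverse)) ++ [e]) := by
    rw [SimpleGraph.Walk.edges_reverse, hWe]; simp
  obtain ⟨c₂, hc₂⟩ := head_edge_eq W.reverse f _ hrev
  have haQ : a ∈ Q'.support := by
    rw [SimpleGraph.Walk.support_transfer]
    exact Q.fst_mem_support_of_mem_edges (hc₁ ▸ he)
  have hbQ : b ∈ Q'.support := by
    rw [SimpleGraph.Walk.support_transfer]
    exact Q.fst_mem_support_of_mem_edges (hc₂ ▸ hf')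
  -- a path from `a` to `b` inside `Q`.
  set R₀ : H.Walk a b := (Q'.takeUntil a haQ).reverse.append (Q'.takeUntil b hbQ) with hR₀
  have hR₀sub : R₀.edges ⊆ Q.edges := by
    intro e' he'
    rw [hR₀, SimpleGraph.Walk.edges_append, List.mem_append] at he'
    rcases he' with he' | he'
    · rw [SimpleGraph.Walk.edges_reverse, List.mem_reverse] at he'
      exact hQ'e ▸ (Q'.edges_takeUntil_subset haQ he')
    · exact hQ'e ▸ (Q'.edges_takeUntil_subset hbQ he')
  -- uniqueness of paths in the acyclic graph `H`.
  have huniq : (⟨W, hWpath⟩ : H.Path a b) = R₀.toPath := hac.path_unique _ _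
  have hWsub : W.edges ⊆ Q.edges := by
    have : W.edges = (R₀.toPath : H.Walk a b).edges := by rw [← huniq]
    rw [this]
    exact fun e' he' => hR₀sub (R₀.edges_toPath_subset he')
  have : g ∈ Q.edges := hWsub (by rw [hWe]; simp)
  exact hg this
end

section
/- Let P be a simple path partitioned into consecutive subpaths P_1, ..., P_m, and let Q be a family of simple paths each of which intersects P in a contiguous subpath. Define cov(X) as the minimum number of paths from Q needed to cover X (X contained in their union). Then cov(P) ≥ Σ_{j=1}^{m} (cov(P_j) - 1). -/
open SimpleGraph

variable {V : Type*}

/-- A family of edge lists `𝒬` covers an edge list `X` if every edge of `X` lies on some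
member of `𝒬`. -/
def Covers [DecidableEq V] (𝒬 : Finset (List (Sym2 V))) (X : List (Sym2 V)) : Prop :=
  ∀ e ∈ X, ∃ q ∈ 𝒬, e ∈ q

/-- `cov 𝒬 X` is the minimum size of a subfamily of `𝒬` covering `X`. -/
noncomputable def cov [DecidableEq V] (𝒬 : Finset (List (Sym2 V))) (X : List (Sym2 V)) : ℕ :=
  sInf {n | ∃ 𝒬' ⊆ 𝒬, 𝒬'.card = n ∧ Covers 𝒬' X}

/-- In a nodup list, if the sublist filtered by membership in `q` is the contiguous
slice `(L.drop i).take j`, then element positions in `q` are exactly `[i, i+j)`. -/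
theorem filter_interval {α : Type*} [DecidableEq α] {L q : List α}
    (hnd : L.Nodup) {i j : ℕ}
    (h : L.filter (fun e => e ∈ q) = (L.drop i).take j)
    {k : ℕ} (hk : k < L.length) : L[k] ∈ q ↔ i ≤ k ∧ k < i + j := by
  constructor
  · intro hq
    have hmem : L[k] ∈ (L.drop i).take j := by
      rw [← h]; exact List.mem_filter.2 ⟨List.getElem_mem hk, by simpa using hq⟩
    obtain ⟨t, ht, hEq⟩ := List.mem_iff_getElem.1 hmem
    have ht1 : t < j := lt_of_lt_of_le ht (by simp)
    have ht2 : i + t < L.length := by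
      have := ht
      simp [List.length_take, List.length_drop] at this
      omega
    have : L[i + t] = L[k] := by
      rw [← hEq, List.getElem_take, List.getElem_drop]
    have := (hnd.getElem_inj_iff).1 this
    omega
  · rintro ⟨h1, h2⟩
    have hd : k - i < (L.drop i).length := by simp [List.length_drop]; omega
    have hdt : k - i < ((L.drop i).take j).length := by
      simp [List.length_take, List.length_drop]; omega
    have : ((L.drop i).take j)[k - i] = L[k] := by
      rw [List.getElem_take, List.getElem_drop]
      congr 1; omega
    have hmem : L[k] ∈ (L.drop i).take j := this ▸ List.getElem_mem hdt
    rw [← h] at hmem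
    simpa using (List.mem_filter.1 hmem).2

/-- let `P` be a simple path split into consecutive edge-disjoint subpaths
`P₁, …, P_m` (given by their edge lists, whose concatenation is the edge list of `P`),
and let `𝒬` be a finite family of (edge lists of) simple paths, each of which intersects `P`
in a contiguous subpath of `P`.  If `𝒬` covers `P`, then
`cov(P) ≥ Σⱼ (cov(Pⱼ) - 1)`. -/
theorem cov_super_additive [DecidableEq V] (G : SimpleGraph V)
    {u v : V} (P : G.Walk u v) (hP : P.IsPath)
    (𝒬 : Finset (List (Sym2 V)))
    (hpaths : ∀ q ∈ 𝒬, ∃ (a b : V) (L : G.Walk a b), L.IsPath ∧ L.edges = q)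
    (hcontig : ∀ q ∈ 𝒬, ∃ i j : ℕ,
        P.edges.filter (fun e => e ∈ q) = (P.edges.drop i).take j)
    {m : ℕ} (Ps : Fin m → List (Sym2 V))
    (hpart : (List.ofFn Ps).flatten = P.edges)
    (hcov : Covers 𝒬 P.edges) :
    ∑ j : Fin m, (cov 𝒬 (Ps j) - 1) ≤ cov 𝒬 P.edges := by
  classical
  set L : List (Sym2 V) := P.edges with hLdef
  have hnd : L.Nodup := hP.isTrail.edges_nodup
  -- choose per-q interval data
  obtain ⟨F, hF⟩ : ∃ F : List (Sym2 V) → ℕ × ℕ, ∀ q ∈ 𝒬,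
      L.filter (fun e => e ∈ q) = (L.drop (F q).1).take (F q).2 := by
    choose f g h using hcontig
    exact ⟨fun q => if hq : q ∈ 𝒬 then (f q hq, g q hq) else (0, 0),
      fun q hq => by simp only [dif_pos hq]; exact h q hq⟩
  -- a minimum cover S of L
  have hne : {n | ∃ 𝒬' ⊆ 𝒬, 𝒬'.card = n ∧ Covers 𝒬' L}.Nonempty :=
    ⟨𝒬.card, 𝒬, le_refl _, rfl, hcov⟩
  obtain ⟨S, hS𝒬, hScard, hScov⟩ := Nat.sInf_mem hne
  -- block offsets
  set o : ℕ → ℕ := fun j => ((List.ofFn Ps).take j).flatten.length with hodef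
  have hblock : ∀ j : Fin m,
      L.drop (o j.val) = Ps j ++ ((List.ofFn Ps).drop (j.val + 1)).flatten := by
    intro j
    have hjlt : j.val < (List.ofFn Ps).length := by simp
    have h1 : L = ((List.ofFn Ps).take j.val).flatten ++ ((List.ofFn Ps).drop j.val).flatten := by
      rw [← List.flatten_append, List.take_append_drop, hpart]
    rw [h1, hodef, List.drop_left, List.drop_eq_getElem_cons hjlt, List.flatten_cons,
      List.getElem_ofFn]
  have hblockElem : ∀ (j : Fin m) (t : ℕ) (ht : t < (Ps j).length),
      ∃ hlt : o j.val + t < L.length, L[o j.val + t] = (Ps j)[t] := by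
    intro j t ht
    have hlen : t < (L.drop (o j.val)).length := by
      rw [hblock j]; simp; omega
    have hlt : o j.val + t < L.length := by
      simp [List.length_drop] at hlen; omega
    refine ⟨hlt, ?_⟩
    have h1 : (L.drop (o j.val))[t]'hlen = (Ps j)[t]'ht := by
      simp only [hblock j]
      exact List.getElem_append_left ht
    rw [← h1, List.getElem_drop]
  have hmono : ∀ a b : ℕ, a ≤ b → o a ≤ o b := by
    intro a b hab
    have h1 : (List.ofFn Ps).take a <+: (List.ofFn Ps).take b := by
      rw [show (List.ofFn Ps).take a = ((List.ofFn Ps).take b).take a from by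
        rw [List.take_take, min_eq_left hab]]
      exact List.take_prefix _ _
    obtain ⟨t, ht⟩ := h1
    simp only [hodef]
    rw [← ht, List.flatten_append, List.length_append]
    omega
  have hsucc : ∀ j : Fin m, o (j.val + 1) = o j.val + (Ps j).length := by
    intro j
    have hjlt : j.val < (List.ofFn Ps).length := by simp
    simp only [hodef, List.take_succ, List.getElem?_eq_getElem hjlt, List.getElem_ofFn,
      List.flatten_append, List.length_append, Option.toList_some, List.flatten_cons]
    simp
  -- charged sets
  set T : Fin m → Finset (List (Sym2 V)) := fun j =>
    S.filter (fun q => o j.val ≤ (F q).1 ∧ (F q).1 < o j.val + (Ps j).length) with hTdef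
  -- per-block bound
  have hblockcov : ∀ j : Fin m, cov 𝒬 (Ps j) ≤ (T j).card + 1 := by
    intro j
    set C : Finset (List (Sym2 V)) :=
      S.filter (fun q => (F q).1 < o j.val ∧ o j.val < (F q).1 + (F q).2) with hCdef
    have hcoverAux : ∀ (D : Finset (List (Sym2 V))), (∀ q ∈ C, ∃ q₀ ∈ D,
          ∀ q' ∈ C, (F q').1 + (F q').2 ≤ (F q₀).1 + (F q₀).2 ∧ q₀ ∈ C) →
        Covers (T j ∪ D) (Ps j) := by
      intro D hD
      intro e he
      obtain ⟨t, ht, hEq⟩ := List.mem_iff_getElem.1 he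
      obtain ⟨hlt, hLe⟩ := hblockElem j t ht
      have heL : e ∈ L := by rw [← hEq, ← hLe]; exact List.getElem_mem hlt
      obtain ⟨q, hqS, hqe⟩ := hScov e heL
      have hq𝒬 : q ∈ 𝒬 := hS𝒬 hqS
      have hqp : L[o j.val + t] ∈ q := by rw [hLe, hEq]; exact hqe
      have hint := (filter_interval hnd (hF q hq𝒬) hlt).1 hqp
      by_cases hcase : o j.val ≤ (F q).1
      · exact ⟨q, Finset.mem_union_left _
          (Finset.mem_filter.2 ⟨hqS, hcase, by omega⟩), hqe⟩
      · have hqC : q ∈ C := Finset.mem_filter.2 ⟨hqS, by omega, by omega⟩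
        obtain ⟨q₀, hq₀D, hq₀max⟩ := hD q hqC
        obtain ⟨hmax, hq₀C⟩ := hq₀max q hqC
        have hq₀C' := Finset.mem_filter.1 hq₀C
        have hq₀𝒬 : q₀ ∈ 𝒬 := hS𝒬 hq₀C'.1
        have h2 : L[o j.val + t] ∈ q₀ :=
          (filter_interval hnd (hF q₀ hq₀𝒬) hlt).2 (by omega)
        refine ⟨q₀, Finset.mem_union_right _ hq₀D, ?_⟩
        rw [← hEq, ← hLe]; exact h2
    by_cases hCne : C.Nonempty
    · obtain ⟨q₀, hq₀C, hq₀max⟩ := Finset.exists_max_image C (fun q => (F q).1 + (F q).2) hCne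
      have hcover : Covers (T j ∪ {q₀}) (Ps j) := by
        apply hcoverAux
        intro q hq
        exact ⟨q₀, Finset.mem_singleton_self _, fun q' hq' => ⟨hq₀max q' hq', hq₀C⟩⟩
      have hsub : T j ∪ {q₀} ⊆ 𝒬 := by
        intro x hx
        rcases Finset.mem_union.1 hx with hx | hx
        · exact hS𝒬 (Finset.mem_of_mem_filter _ hx)
        · rw [Finset.mem_singleton.1 hx]
          exact hS𝒬 (Finset.mem_of_mem_filter _ hq₀C)
      have h1 : cov 𝒬 (Ps j) ≤ (T j ∪ {q₀}).card :=
        Nat.sInf_le ⟨T j ∪ {q₀}, hsub, rfl, hcover⟩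
      calc cov 𝒬 (Ps j) ≤ (T j ∪ {q₀}).card := h1
        _ ≤ (T j).card + 1 := by
            simpa using Finset.card_union_le (T j) {q₀}
    · have hcover : Covers (T j ∪ ∅) (Ps j) := by
        apply hcoverAux
        intro q hq
        exact absurd ⟨q, hq⟩ hCne
      rw [Finset.union_empty] at hcover
      have hsub : T j ⊆ 𝒬 := fun x hx => hS𝒬 (Finset.mem_of_mem_filter _ hx)
      have h1 : cov 𝒬 (Ps j) ≤ (T j).card := Nat.sInf_le ⟨T j, hsub, rfl, hcover⟩
      omega
  -- disjointness of the charged sets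
  have hdisj : ∀ j ∈ (Finset.univ : Finset (Fin m)), ∀ j' ∈ Finset.univ, j ≠ j' →
      Disjoint (T j) (T j') := by
    intro j _ j' _ hne'
    rw [Finset.disjoint_left]
    intro q hq hq'
    have h1 := (Finset.mem_filter.1 hq).2
    have h2 := (Finset.mem_filter.1 hq').2
    rcases lt_or_gt_of_ne hne' with h | h
    · have hs := hsucc j
      have hm := hmono (j.val + 1) j'.val (Fin.lt_def.1 h)
      omega
    · have hs := hsucc j'
      have hm := hmono (j'.val + 1) j.val (Fin.lt_def.1 h)
      omega
  have hsum : ∑ j : Fin m, (T j).card ≤ S.card := by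
    rw [← Finset.card_biUnion hdisj]
    apply Finset.card_le_card
    exact Finset.biUnion_subset.2 fun j _ => Finset.filter_subset _ _
  calc ∑ j : Fin m, (cov 𝒬 (Ps j) - 1) ≤ ∑ j : Fin m, (T j).card :=
        Finset.sum_le_sum fun j _ => by have := hblockcov j; omega
    _ ≤ S.card := hsum
    _ = cov 𝒬 L := hScard
end
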